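/- Let λ, R > 0. Define τ(s) = s²(1 - 1/tan²(λ(s-R))) and σ(s) = (1 - 4λ(R + π/(2λ)))s² + 4λs³ on I = [R + π/(4λ), R + π/(2λ)], with τ extended continuously at the right endpoint by (R+π/(2λ))². Then τ(s) ≥ σ(s) for all s ∈ I. -/

import Mathlib

/-- With `τ(s) = s²(1 - 1/tan²(λ(s-R)))`, extended continuously by
`τ(R + π/(2λ)) = (R + π/(2λ))²`, and `σ(s) = (1 - 4λ(R + π/(2λ)))s² + 4λs³`,
one has `τ ≥ σ` on `[R + π/(4λ), R + π/(2λ)]`. -/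
theorem tau_ge_sigma (lam R : ℝ) (hlam : 0 < lam) (hR : 0 < R) :
    ∀ s ∈ Set.Icc (R + Real.pi / (4 * lam)) (R + Real.pi / (2 * lam)),
      (1 - 4 * lam * (R + Real.pi / (2 * lam))) * s ^ 2 + 4 * lam * s ^ 3 ≤
        (if s = R + Real.pi / (2 * lam) then (R + Real.pi / (2 * lam)) ^ 2
         else s ^ 2 * (1 - 1 / Real.tan (lam * (s - R)) ^ 2)) := by
  intro s hs
  obtain ⟨hs1, hs2⟩ := hs
  have hpi := Real.pi_pos
  have hpi4 := Real.pi_le_four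
  have hlam' : lam ≠ 0 := ne_of_gt hlam
  by_cases h : s = R + Real.pi / (2 * lam)
  · rw [if_pos h, h]
    have : lam * (Real.pi / (2 * lam)) = Real.pi / 2 := by field_simp
    nlinarith [sq_nonneg (R + Real.pi / (2 * lam))]
  · rw [if_neg h]
    set t : ℝ := Real.pi / 2 - lam * (s - R) with ht
    clear_value t
    have hs_lt : s < R + Real.pi / (2 * lam) := lt_of_le_of_ne hs2 h
    have ht_pos : 0 < t := by
      have : lam * (s - R) < lam * (Real.pi / (2 * lam)) := by
        apply mul_lt_mul_of_pos_left _ hlam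
        linarith
      have h2 : lam * (Real.pi / (2 * lam)) = Real.pi / 2 := by field_simp
      simp only [ht]; linarith [h2 ▸ this]
    have ht_le : t ≤ Real.pi / 4 := by
      have : lam * (Real.pi / (4 * lam)) ≤ lam * (s - R) := by
        apply mul_le_mul_of_nonneg_left _ (le_of_lt hlam)
        linarith
      have h2 : lam * (Real.pi / (4 * lam)) = Real.pi / 4 := by field_simp
      simp only [ht]; linarith [h2 ▸ this]
    have ht1 : t ≤ 1 := by linarith
    -- cos t ≥ 1/2
    have hcos : (1:ℝ)/2 ≤ Real.cos t := by
      have h1 : Real.cos (Real.pi / 4) ≤ Real.cos t :=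
        Real.cos_le_cos_of_nonneg_of_le_pi ht_pos.le (by linarith) ht_le
      have h2 : Real.cos (Real.pi / 4) = Real.sqrt 2 / 2 := Real.cos_pi_div_four
      nlinarith [Real.sq_sqrt (by norm_num : (2:ℝ) ≥ 0), Real.sqrt_nonneg 2]
    have hsin : Real.sin t ≤ t := Real.sin_le ht_pos.le
    have hsinpos : 0 < Real.sin t := Real.sin_pos_of_pos_of_lt_pi ht_pos (by linarith)
    have hcospos : (0:ℝ) < Real.cos t := by linarith
    have htan : Real.tan t ≤ 2 * t := by
      rw [Real.tan_eq_sin_div_cos, div_le_iff₀ hcospos]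
      nlinarith
    have htan_nonneg : 0 ≤ Real.tan t :=
      Real.tan_nonneg_of_nonneg_of_le_pi_div_two ht_pos.le (by linarith)
    have h4t : Real.tan t ^ 2 ≤ 4 * t := by nlinarith
    have htan_eq : 1 / Real.tan (lam * (s - R)) ^ 2 = Real.tan t ^ 2 := by
      have : Real.tan t = (Real.tan (lam * (s - R)))⁻¹ := by
        rw [ht, Real.tan_pi_div_two_sub]
      rw [this]
      rw [inv_pow, one_div]
    rw [htan_eq]
    have hspos : 0 < s := by
      have : 0 < Real.pi / (4 * lam) := by positivity
      linarith
    have hkey : (1 - 4 * lam * (R + Real.pi / (2 * lam))) * s ^ 2 + 4 * lam * s ^ 3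
        = s ^ 2 * (1 - 4 * t) := by
      simp only [ht]
      field_simp
      ring
    rw [hkey]
    have : 0 ≤ s ^ 2 * (4 * t - Real.tan t ^ 2) :=
      mul_nonneg (sq_nonneg s) (by linarith)
    nlinarith
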